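/- In the setting of the fan I constructed from a finite symmetric generating subset R of L: suppose in addition R⁺ ⊆ R is a subset generating ℚ ⊗ L over ℚ, and let ν = {h ∈ N_ℝ : h(l) ≥ 0 for all l ∈ R⁺}. Then the cones σ ∈ I with σ ⊆ ν form a rational finite subdivision of ν; that is, they form a fan whose support equals ν. Moreover, for σ ∈ I one has σ ∩ ν ∈ I. -/

import Mathlib

open Pointwise

/-- The rational polyhedral cone in `N_ℝ = Hom(L,ℝ)` cut out by a set
`R' ⊆ L` of inequalities `h(l) ≥ 0`. -/
def coneOf {L : Type*} [AddCommGroup L] (R' : Set L) : Set (L →+ ℝ) :=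
  {h | ∀ l ∈ R', 0 ≤ h l}

/-- `τ` is a face of the cone `σ`: a subset of the form `σ ∩ ker(l)` for some
`l ∈ L` with `l ≥ 0` on `σ` (the case `l = 0` giving `σ` itself). -/
def IsFaceOf {L : Type*} [AddCommGroup L] (σ τ : Set (L →+ ℝ)) : Prop :=
  ∃ l : L, (∀ h ∈ σ, 0 ≤ h l) ∧ τ = {h ∈ σ | h l = 0}

/-- The collection `I` of cones `σ = {h : h(l) ≥ 0 ∀ l ∈ R'}` for subsets
`R'` of `R` with `R = R' ∪ (-R')`. -/
def fanI {L : Type*} [AddCommGroup L] (R : Finset L) : Set (Set (L →+ ℝ)) :=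
  {σ | ∃ R' : Set L, R' ⊆ ↑R ∧ (↑R : Set L) = R' ∪ (-R') ∧ σ = coneOf R'}

lemma coneOf_union {L : Type*} [AddCommGroup L] (A B : Set L) :
    coneOf (A ∪ B) = coneOf A ∩ coneOf B := by
  ext h
  constructor
  · intro hh; exact ⟨fun l hl => hh l (Or.inl hl), fun l hl => hh l (Or.inr hl)⟩
  · rintro ⟨h1, h2⟩ l (hl | hl)
    exacts [h1 l hl, h2 l hl]


/-- In the setting of the fan `I` constructed from a finite symmetric
generating subset `R` of `L`: if `R⁺ ⊆ R` also generates `ℚ ⊗ L` over `ℚ`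
and `ν = {h : h(l) ≥ 0 ∀ l ∈ R⁺}`, then the cones `σ ∈ I` with `σ ⊆ ν`
form a rational finite subdivision of `ν`: they form a fan (pairwise
intersections are faces and the collection is closed under taking faces)
whose support equals `ν`. Moreover, `σ ∩ ν ∈ I` for every `σ ∈ I`. -/
theorem statement14 {L : Type*} [AddCommGroup L]
    [Module.Free ℤ L] [Module.Finite ℤ L]
    (R : Finset L) (hsym : ∀ x : L, x ∈ R ↔ -x ∈ R)
    (hspan : ∀ x : L, ∃ n : ℕ, 0 < n ∧ (n : ℤ) • x ∈ Submodule.span ℤ (↑R : Set L))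
    (Rp : Finset L) (hsub : Rp ⊆ R)
    (hspanp : ∀ x : L, ∃ n : ℕ, 0 < n ∧ (n : ℤ) • x ∈ Submodule.span ℤ (↑Rp : Set L)) :
    (∀ σ ∈ fanI R, σ ∩ coneOf (↑Rp : Set L) ∈ fanI R) ∧
    ⋃₀ {σ ∈ fanI R | σ ⊆ coneOf (↑Rp : Set L)} = coneOf (↑Rp : Set L) ∧
    (∀ σ₁ ∈ {σ ∈ fanI R | σ ⊆ coneOf (↑Rp : Set L)},
      ∀ σ₂ ∈ {σ ∈ fanI R | σ ⊆ coneOf (↑Rp : Set L)},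
      IsFaceOf σ₁ (σ₁ ∩ σ₂)) ∧
    (∀ σ ∈ {σ ∈ fanI R | σ ⊆ coneOf (↑Rp : Set L)}, ∀ τ : Set (L →+ ℝ),
      IsFaceOf σ τ → τ ∈ {σ ∈ fanI R | σ ⊆ coneOf (↑Rp : Set L)}) := by
  classical
  have hRpR : (↑Rp : Set L) ⊆ (↑R : Set L) := fun x hx => hsub hx
  refine ⟨?_, ?_, ?_, ?_⟩
  -- Part 1
  · rintro σ ⟨R', hs, hc, rfl⟩
    refine ⟨R' ∪ ↑Rp, Set.union_subset hs hRpR, ?_, (coneOf_union R' ↑Rp).symm⟩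
    apply Set.Subset.antisymm
    · intro x hx
      have : x ∈ R' ∪ -R' := hc ▸ hx
      rcases this with hx' | hx'
      · exact Or.inl (Or.inl hx')
      · refine Or.inr ?_
        rw [Set.mem_neg] at hx' ⊢
        exact Or.inl hx'
    · intro x hx
      rcases hx with (hx | hx) | hx
      · exact hs hx
      · exact hRpR hx
      · rw [Set.mem_neg] at hx
        rcases hx with hx | hx
        · exact (hsym x).mpr (hs hx)
        · exact (hsym x).mpr (hRpR hx)
  -- Part 2
  · apply Set.Subset.antisymm
    · rintro h ⟨σ, ⟨_, hσν⟩, hh⟩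
      exact hσν hh
    · intro h hh
      refine ⟨coneOf ((↑Rp : Set L) ∪ {l : L | l ∈ (↑R : Set L) ∧ 0 ≤ h l}),
        ⟨⟨_, Set.union_subset hRpR (fun x hx => hx.1), ?_, rfl⟩,
          fun g hg l hl => hg l (Or.inl hl)⟩, ?_⟩
      · apply Set.Subset.antisymm
        · intro x hx
          by_cases hx0 : 0 ≤ h x
          · exact Or.inl (Or.inr ⟨hx, hx0⟩)
          · refine Or.inr ?_
            rw [Set.mem_neg]
            refine Or.inr ⟨(hsym x).mp hx, ?_⟩
            rw [map_neg]
            linarith [not_le.mp hx0]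
        · intro x hx
          rcases hx with (hx | hx) | hx
          · exact hRpR hx
          · exact hx.1
          · rw [Set.mem_neg] at hx
            rcases hx with hx | hx
            · exact (hsym x).mpr (hRpR hx)
            · exact (hsym x).mpr hx.1
      · intro l hl
        rcases hl with hl | hl
        · exact hh l hl
        · exact hl.2
  -- Part 3
  · rintro σ₁ ⟨⟨R₁, hs1, hc1, rfl⟩, _⟩ σ₂ ⟨⟨R₂, hs2, hc2, rfl⟩, _⟩
    set S : Finset L := R.filter (fun m => m ∈ R₂ ∧ -m ∈ R₁) with hS
    refine ⟨∑ m ∈ S, -m, ?_, ?_⟩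
    · intro h hh
      rw [map_sum]
      apply Finset.sum_nonneg
      intro m hm
      exact hh (-m) ((Finset.mem_filter.mp hm).2.2
      )
    · ext h
      simp only [Set.mem_inter_iff, Set.mem_setOf_eq]
      constructor
      · rintro ⟨h1, h2⟩
        refine ⟨h1, ?_⟩
        rw [map_sum]
        apply Finset.sum_eq_zero
        intro m hm
        obtain ⟨hmR, hm2, hm1⟩ := Finset.mem_filter.mp hm
        have a1 : 0 ≤ h (-m) := h1 (-m) hm1
        have a2 : 0 ≤ h m := h2 m hm2
        rw [map_neg] at a1 ⊢
        linarith
      · rintro ⟨h1, hz⟩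
        refine ⟨h1, ?_⟩
        intro x hx
        have hxR : x ∈ (↑R : Set L) := hs2 hx
        have : x ∈ R₁ ∪ -R₁ := hc1 ▸ hxR
        rcases this with hx' | hx'
        · exact h1 x hx'
        · rw [Set.mem_neg] at hx'
          have hxS : x ∈ S := Finset.mem_filter.mpr ⟨by exact_mod_cast hxR, hx, hx'⟩
          rw [map_sum] at hz
          have := (Finset.sum_eq_zero_iff_of_nonneg
            (fun m hm => h1 (-m) (Finset.mem_filter.mp hm).2.2)).mp hz x hxS
          rw [map_neg] at this
          linarith
  -- Part 4
  · rintro σ ⟨⟨R', hs, hc, rfl⟩, hσν⟩ τ ⟨l, hl, rfl⟩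
    set σ := coneOf R' with hσ
    set τ := {h ∈ σ | h l = 0} with hτ
    have hτσ : τ ⊆ σ := fun h hh => hh.1
    have hzero : (0 : L →+ ℝ) ∈ τ := ⟨fun m _ => le_refl 0, rfl⟩
    -- maximal element
    set f : (L →+ ℝ) → Finset L := fun h => R.filter (fun m => m ∈ R' ∧ 0 < h m) with hf
    have hfin : (f '' τ).Finite := by
      apply Set.Finite.subset (R.powerset : Finset (Finset L)).finite_toSet
      rintro _ ⟨h, _, rfl⟩
      exact Finset.mem_coe.mpr (Finset.mem_powerset.mpr (Finset.filter_subset _ _))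
    obtain ⟨h₀, hh₀τ, hmax0⟩ := Set.Finite.exists_maximalFor' f τ hfin ⟨0, hzero⟩
    have hmax : ∀ a' ∈ τ, f h₀ ≤ f a' → f h₀ = f a' :=
      fun a' ha' hle => le_antisymm hle (hmax0 ha' hle)
    have hkey : ∀ h ∈ τ, ∀ m ∈ R', h₀ m = 0 → h m = 0 := by
      intro h hh m hm hm0
      have hadd : h₀ + h ∈ τ := by
        refine ⟨fun m' hm' => ?_, ?_⟩
        · have := hh₀τ.1 m' hm'
          have := hh.1 m' hm'
          simp only [AddMonoidHom.add_apply]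
          linarith
        · simp only [AddMonoidHom.add_apply, hh₀τ.2, hh.2, add_zero]
      have hle : f h₀ ≤ f (h₀ + h) := by
        intro m' hm'
        obtain ⟨hm'R, hm'R', hm'0⟩ := Finset.mem_filter.mp hm'
        refine Finset.mem_filter.mpr ⟨hm'R, hm'R', ?_⟩
        have := hh.1 m' hm'R'
        simp only [AddMonoidHom.add_apply]
        linarith
      have heq := hmax (h₀ + h) hadd hle
      by_contra hne
      have hpos : 0 < h m := lt_of_le_of_ne (hh.1 m hm) (Ne.symm hne)
      have hmem : m ∈ f (h₀ + h) := Finset.mem_filter.mpr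
        ⟨by exact_mod_cast hs hm, hm, by simp only [AddMonoidHom.add_apply]; linarith⟩
      rw [← heq] at hmem
      have := (Finset.mem_filter.mp hmem).2.2
      linarith
    -- R'' := R' ∪ -Z
    set Z : Set L := {m | m ∈ R' ∧ h₀ m = 0} with hZ
    have hτ' : τ = coneOf (R' ∪ -Z) := by
      apply Set.Subset.antisymm
      · intro h hh x hx
        rcases hx with hx | hx
        · exact hh.1 x hx
        · rw [Set.mem_neg] at hx
          have := hkey h hh (-x) hx.1 hx.2
          rw [map_neg] at this
          linarith
      · intro h hh
        have hhσ : h ∈ σ := fun m hm => hh m (Or.inl hm)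
        have hbound : ∀ m ∈ R', h₀ m = 0 → h m = 0 := by
          intro m hm hm0
          have a1 : 0 ≤ h m := hhσ m hm
          have a2 : 0 ≤ h (-m) := hh (-m) (Or.inr (by rw [Set.mem_neg, neg_neg]; exact ⟨hm, hm0⟩))
          rw [map_neg] at a2
          linarith
        refine ⟨hhσ, ?_⟩
        -- need h l = 0
        set c : ℝ := ∑ m ∈ R, max (h m / h₀ m) 0 with hcdef
        have hcnn : ∀ m ∈ R, max (h m / h₀ m) 0 ≤ c :=
          fun m hm => Finset.single_le_sum (f := fun m => max (h m / h₀ m) 0)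
            (fun i _ => le_max_right _ _) hm
        have hg : ∃ g : L →+ ℝ, ∀ x, g x = c * h₀ x - h x :=
          ⟨AddMonoidHom.mk' (fun x => c * h₀ x - h x) (by intro a b; simp [map_add]; ring),
            fun x => rfl⟩
        obtain ⟨g, hgx⟩ := hg
        have hgσ : g ∈ σ := by
          intro m hm
          rw [hgx]
          rcases eq_or_lt_of_le (hh₀τ.1 m hm) with h0 | h0
          · rw [hbound m hm h0.symm, ← h0]
            simp
          · have : h m / h₀ m ≤ c := le_trans (le_max_left _ _) (hcnn m (by exact_mod_cast hs hm))
            rw [div_le_iff₀ h0] at this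
            linarith
        have := hl g hgσ
        rw [hgx, hh₀τ.2, mul_zero, zero_sub] at this
        have h2 := hl h hhσ
        linarith
    refine ⟨⟨R' ∪ -Z, ?_, ?_, hτ'⟩, fun h hh => hσν (hτσ hh)⟩
    · intro x hx
      rcases hx with hx | hx
      · exact hs hx
      · rw [Set.mem_neg] at hx
        exact (hsym x).mpr (hs hx.1)
    · apply Set.Subset.antisymm
      · intro x hx
        have : x ∈ R' ∪ -R' := hc ▸ hx
        rcases this with hx' | hx'
        · exact Or.inl (Or.inl hx')
        · rw [Set.mem_neg] at hx'
          exact Or.inr (by rw [Set.mem_neg]; exact Or.inl hx')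
      · intro x hx
        rcases hx with (hx | hx) | hx
        · exact hs hx
        · rw [Set.mem_neg] at hx
          exact (hsym x).mpr (hs hx.1)
        · rw [Set.mem_neg] at hx
          rcases hx with hx | hx
          · exact (hsym x).mpr (hs hx)
          · rw [Set.mem_neg, neg_neg] at hx
            exact hs hx.1
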